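/- Let κ = r, or assume k^{ch} ≥ 0 and let κ ∈ {k^{ch}, r}. Then for every l ∈ {0,…,κ}: the function 𝒫_{l,κ}, restricted to H (note H ⊆ H_l = H*_{l,κ}), is holomorphic on H; for every z ∈ H one has (∏_{j=l}^{κ} σ_j)·𝒫_{l,κ}(z) ∈ ℂ⁻; and if moreover z ∈ H ∩ ℝ then (∏_{j=l}^{κ} σ_j)·𝒫_{l,κ}(z) is a positive real number. (Remark 5.21 of the paper for a fixed value of the parameter t.) -/

import Mathlib

/-- The iterated functions `g_l` of a logarithmic scale (for a fixed parameter `t`):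
`g_0 x = x - Θ 0`, `g_{l+1} x = log (σ l * g_l x) - Θ (l+1)`. -/
noncomputable def gIter (Θ σ : ℕ → ℝ) : ℕ → ℝ → ℝ
  | 0, x => x - Θ 0
  | l + 1, x => Real.log (σ l * gIter Θ σ l x) - Θ (l + 1)

/-- The domains `D_l`: `D_0 = ℝ`, `D_{l+1} = {x ∈ D_l : σ l * g_l x > 0}`.
Note that the final domain `D` of the paper equals `DIter Θ σ (r+1)`. -/
def DIter (Θ σ : ℕ → ℝ) : ℕ → Set ℝ
  | 0 => Set.univ
  | l + 1 => {x | x ∈ DIter Θ σ l ∧ 0 < σ l * gIter Θ σ l x}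

/-- The auxiliary numbers `μ_{j,l}`: `μ_{0,l} = Θ l`,
`μ_{j+1,l} = Θ (l-(j+1)) + σ (l-(j+1)) * exp (μ_{j,l})`. -/
noncomputable def muAux (Θ σ : ℕ → ℝ) (l : ℕ) : ℕ → ℝ
  | 0 => Θ l
  | j + 1 => Θ (l - (j + 1)) + σ (l - (j + 1)) * Real.exp (muAux Θ σ l j)

/-- The numbers `μ_l := μ_{l,l}`. -/
noncomputable def mu (Θ σ : ℕ → ℝ) (l : ℕ) : ℝ := muAux Θ σ l l

/-- The complex extensions `z_l` of the functions of a logarithmic scale: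
`z_0 z = z - Θ 0`, `z_{l+1} z = log (σ l * z_l z) - Θ (l+1)`, with the principal
branch of the complex logarithm. -/
noncomputable def zIter (Θ σ : ℕ → ℝ) : ℕ → ℂ → ℂ
  | 0, z => z - (Θ 0 : ℂ)
  | l + 1, z => Complex.log ((σ l : ℂ) * zIter Θ σ l z) - (Θ (l + 1) : ℂ)

/-- The complex domains `H_l`: `H_0 = ℂ`,
`H_{l+1} = {z ∈ H_l : σ l * z_l z ∈ ℂ⁻}`, where `ℂ⁻ = ℂ ∖ ℝ_{≤0}` is the slit plane.
Note that the final domain `H` of the paper equals `HIter Θ σ (r+1)`. -/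
def HIter (Θ σ : ℕ → ℝ) : ℕ → Set ℂ
  | 0 => Set.univ
  | l + 1 => {z | z ∈ HIter Θ σ l ∧ (σ l : ℂ) * zIter Θ σ l z ∈ Complex.slitPlane}

/-- The functions `𝒫_{l,κ}`: `𝒫_{0,κ} z = z - μ_κ` and
`𝒫_{l+1,κ} z = log (1 + σ l * 𝒫_{l,κ} z / exp (μ_{κ-(l+1),κ}))`. -/
noncomputable def PIter (Θ σ : ℕ → ℝ) (κ : ℕ) : ℕ → ℂ → ℂ
  | 0, z => z - (mu Θ σ κ : ℂ)
  | l + 1, z =>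
      Complex.log (1 + (σ l : ℂ) * PIter Θ σ κ l z / (Real.exp (muAux Θ σ κ (κ - (l + 1))) : ℂ))

/-- The domains `H*_{l,κ}`: `H*_{0,κ} = ℂ` and
`H*_{l+1,κ} = {z ∈ H*_{l,κ} : 1 + σ l * 𝒫_{l,κ} z / exp (μ_{κ-(l+1),κ}) ∈ ℂ⁻}`. -/
def HstarIter (Θ σ : ℕ → ℝ) (κ : ℕ) : ℕ → Set ℂ
  | 0 => Set.univ
  | l + 1 => {z | z ∈ HstarIter Θ σ κ l ∧
      1 + (σ l : ℂ) * PIter Θ σ κ l z / (Real.exp (muAux Θ σ κ (κ - (l + 1))) : ℂ) ∈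
        Complex.slitPlane}

open Classical in
/-- The change index `k^{ch}`: `max {l ∈ {0,…,r} : σ l = -1} - 1` if such `l` exists,
and `-2` otherwise. -/
noncomputable def kch (σ : ℕ → ℝ) (r : ℕ) : ℤ :=
  if ∃ l, l ≤ r ∧ σ l = -1 then ((sSup {l : ℕ | l ≤ r ∧ σ l = -1} : ℕ) : ℤ) - 1 else -2

section Helpers

variable (Θ σ : ℕ → ℝ)

lemma HIter_mono {m n : ℕ} (h : m ≤ n) : HIter Θ σ n ⊆ HIter Θ σ m := by
  induction n with
  | zero => simp_all
  | succ n ih =>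
    rcases Nat.le_succ_iff.mp h  with h' | h'
    · exact fun z hz => ih h' hz.1
    · subst h'; rfl

lemma zIter_diff (l : ℕ) : DifferentiableOn ℂ (zIter Θ σ l) (HIter Θ σ l) := by
  induction l with
  | zero =>
    simp only [zIter]
    exact (differentiable_id.sub_const _).differentiableOn
  | succ l ih =>
    intro z hz
    simp only [HIter, Set.mem_setOf_eq] at hz
    have h0 : DifferentiableWithinAt ℂ (zIter Θ σ l) (HIter Θ σ (l + 1)) z :=
      (ih z hz.1).mono (fun w hw => hw.1)
    have h1 : DifferentiableWithinAt ℂ (fun w => (σ l : ℂ) * zIter Θ σ l w)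
        (HIter Θ σ (l + 1)) z := h0.const_mul _
    have h2 : DifferentiableWithinAt ℂ (fun w => Complex.log ((σ l : ℂ) * zIter Θ σ l w))
        (HIter Θ σ (l + 1)) z :=
      DifferentiableAt.comp_differentiableWithinAt (g := Complex.log)
        (f := fun w => (σ l : ℂ) * zIter Θ σ l w) z (Complex.differentiableAt_log hz.2) h1
    exact h2.sub_const _

lemma zIter_im (l : ℕ) (z : ℂ) (hz : z ∈ HIter Θ σ l) (him : z.im = 0) :
    (zIter Θ σ l z).im = 0 := by
  induction l with
  | zero => simp [zIter, him]
  | succ l ih =>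
    have hw : ((σ l : ℂ) * zIter Θ σ l z).im = 0 := by
      simp [Complex.mul_im, ih hz.1]
    have harg : ((σ l : ℂ) * zIter Θ σ l z).arg = 0 := by
      rcases Complex.mem_slitPlane_iff.mp hz.2 with h | h
      · exact Complex.arg_eq_zero_iff.mpr ⟨h.le, hw⟩
      · exact absurd hw h
    simp [zIter, Complex.sub_im, Complex.log_im, harg]

lemma log_div_exp {w : ℂ} (hw : w ∈ Complex.slitPlane) (m : ℝ) :
    Complex.log (w / (Real.exp m : ℂ)) = Complex.log w - m := by
  have h1 : w / (Real.exp m : ℂ) = ((Real.exp m)⁻¹ : ℝ) * w := by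
    push_cast; ring
  rw [h1, Complex.log_ofReal_mul (by positivity) (Complex.slitPlane_ne_zero hw),
    Real.log_inv, Real.log_exp]
  push_cast; ring

lemma muAux_step {κ l : ℕ} (h : l + 1 ≤ κ) :
    muAux Θ σ κ (κ - l) = Θ l + σ l * Real.exp (muAux Θ σ κ (κ - (l + 1))) := by
  have h1 : κ - l = (κ - (l + 1)) + 1 := by omega
  rw [h1]
  have h2 : κ - (κ - (l + 1) + 1) = l := by omega
  simp [muAux, h2]

/-- key identity: `𝒫_{l,κ} z = z_l z - (μ_{κ-l,κ} - Θ l)` on `H_l`. -/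
lemma PIter_eq (hσ : ∀ i, i ≤ r → σ i = 1 ∨ σ i = -1) (hκr : κ ≤ r) :
    ∀ l, l ≤ κ → ∀ z ∈ HIter Θ σ l,
      PIter Θ σ κ l z = zIter Θ σ l z - ((muAux Θ σ κ (κ - l) : ℂ) - (Θ l : ℂ)) := by
  intro l
  induction l with
  | zero =>
    intro _ z _
    simp only [PIter, zIter, Nat.sub_zero, mu]
    ring
  | succ l ih =>
    intro hl z hz
    have hσl : (σ l : ℂ) * (σ l : ℂ) = 1 := by
      rcases hσ l (by omega) with h | h <;> rw [h] <;> norm_num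
    have hIH := ih (by omega) z hz.1
    set m := muAux Θ σ κ (κ - (l + 1)) with hm
    have hmu : (muAux Θ σ κ (κ - l) : ℂ) = Θ l + σ l * Real.exp m := by
      rw [muAux_step Θ σ hl]; push_cast; ring
    have hexp : (Real.exp m : ℂ) ≠ 0 := by
      exact_mod_cast Real.exp_ne_zero m
    have hinner : 1 + (σ l : ℂ) * PIter Θ σ κ l z / (Real.exp m : ℂ)
        = ((σ l : ℂ) * zIter Θ σ l z) / (Real.exp m : ℂ) := by
      rw [hIH, hmu]
      field_simp
      ring_nf
      rw [show ((σ l : ℂ))^2 = 1 by rw [sq]; exact hσl]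
      ring
    rw [show PIter Θ σ κ (l+1) z = Complex.log (1 + (σ l : ℂ) * PIter Θ σ κ l z /
        (Real.exp (muAux Θ σ κ (κ - (l + 1))) : ℂ)) from rfl, ← hm, hinner,
      log_div_exp hz.2]
    rw [show zIter Θ σ (l+1) z = Complex.log ((σ l : ℂ) * zIter Θ σ l z) - (Θ (l+1) : ℂ) from rfl]
    ring

end Helpers

section Helpers2

variable (Θ σ : ℕ → ℝ)

lemma slit_scale {c : ℝ} (hc : 0 < c) {x : ℂ} (hx : x ∈ Complex.slitPlane) :
    (c : ℂ) * x ∈ Complex.slitPlane := by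
  rw [Complex.mem_slitPlane_iff] at hx ⊢
  rcases hx with h | h
  · left; simp only [Complex.mul_re, Complex.ofReal_re, Complex.ofReal_im, zero_mul, sub_zero]
    positivity
  · right; simp only [Complex.mul_im, Complex.ofReal_re, Complex.ofReal_im, zero_mul, add_zero]
    exact mul_ne_zero hc.ne' h

lemma slit_log {v : ℂ} (hv : v ∈ Complex.slitPlane) {ε : ℂ} (hε : ε = 1 ∨ ε = -1)
    (h : ε * Complex.log v ∈ Complex.slitPlane) : ε * (v - 1) ∈ Complex.slitPlane := by
  by_cases him : v.im = 0
  · have hre : 0 < v.re := by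
      rcases Complex.mem_slitPlane_iff.mp hv with h' | h'
      · exact h'
      · exact absurd him h'
    have hv' : v = ((v.re : ℝ) : ℂ) := by
      apply Complex.ext <;> simp [him]
    have hlog : Complex.log v = ((Real.log v.re : ℝ) : ℂ) := by
      conv_lhs => rw [hv']
      rw [← Complex.ofReal_log hre.le]
    rcases hε with rfl | rfl
    · rw [one_mul] at h ⊢
      rw [hlog] at h
      have h2 : 0 < Real.log v.re := by
        rcases Complex.mem_slitPlane_iff.mp h with h' | h'
        · simpa using h'
        · simp at h'
      have h3 : 1 < v.re := (Real.log_pos_iff hre.le).mp h2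
      rw [Complex.mem_slitPlane_iff]
      left; simp only [Complex.sub_re, Complex.one_re]; linarith
    · rw [hlog] at h
      have h2 : Real.log v.re < 0 := by
        rcases Complex.mem_slitPlane_iff.mp h with h' | h'
        · simp only [Complex.mul_re, Complex.neg_re, Complex.one_re, Complex.ofReal_re,
            Complex.neg_im, Complex.one_im, Complex.ofReal_im, neg_zero, zero_mul,
            sub_zero] at h'
          linarith
        · simp at h'
      have h3 : v.re < 1 := (Real.log_neg_iff hre).mp h2
      rw [Complex.mem_slitPlane_iff]
      left
      simp only [Complex.mul_re, Complex.neg_re, Complex.one_re, Complex.sub_re,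
        Complex.neg_im, Complex.one_im, Complex.sub_im, him, neg_zero, zero_mul, sub_zero]
      linarith
  · rcases hε with rfl | rfl
    · rw [Complex.mem_slitPlane_iff]
      right; simpa using him
    · rw [Complex.mem_slitPlane_iff]
      right
      simp only [Complex.mul_im, Complex.neg_re, Complex.one_re, Complex.sub_im,
        Complex.neg_im, Complex.one_im, Complex.sub_re, neg_zero, zero_mul, add_zero,
        Complex.one_im]
      simpa using him

lemma prod_pm (s : Finset ℕ) (f : ℕ → ℂ) (h : ∀ j ∈ s, f j = 1 ∨ f j = -1) :
    (∏ j ∈ s, f j) = 1 ∨ (∏ j ∈ s, f j) = -1 := by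
  induction s using Finset.cons_induction with
  | empty => left; simp
  | cons a s ha ih =>
    rw [Finset.prod_cons]
    rcases h a (Finset.mem_cons_self a s) with h1 | h1 <;>
      rcases ih (fun j hj => h j (Finset.mem_cons_of_mem hj)) with h2 | h2 <;>
      simp [h1, h2]

lemma prod_Icc_split {l κ : ℕ} (h : l ≤ κ) (f : ℕ → ℂ) :
    (∏ j ∈ Finset.Icc l κ, f j) = f l * ∏ j ∈ Finset.Icc (l + 1) κ, f j := by
  rw [← Finset.Ico_add_one_right_eq_Icc, ← Finset.Ico_add_one_right_eq_Icc,
    Finset.prod_eq_prod_Ico_succ_bot (by omega) f]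

lemma main_slit {r κ : ℕ} (hσ : ∀ i, i ≤ r → σ i = 1 ∨ σ i = -1) (hκr : κ ≤ r) :
    ∀ n l, l + n = κ → ∀ z ∈ HIter Θ σ (r + 1),
      (∏ j ∈ Finset.Icc l κ, (σ j : ℂ)) * PIter Θ σ κ l z ∈ Complex.slitPlane := by
  intro n
  induction n with
  | zero =>
    intro l hl z hz
    have hlκ : l = κ := by omega
    subst hlκ
    have hz' : z ∈ HIter Θ σ (l + 1) := HIter_mono Θ σ (by omega) hz
    have hP : PIter Θ σ l l z = zIter Θ σ l z := by
      rw [PIter_eq Θ σ hσ hκr l le_rfl z (HIter_mono Θ σ (by omega) hz)]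
      simp [muAux, Nat.sub_self]
    simp only [HIter, Set.mem_setOf_eq] at hz'
    rw [Finset.Icc_self, Finset.prod_singleton, hP]
    exact hz'.2
  | succ n ih =>
    intro l hl z hz
    have hl1 : l + 1 ≤ κ := by omega
    have hz1 : z ∈ HIter Θ σ (l + 1) := HIter_mono Θ σ (by omega) hz
    simp only [HIter, Set.mem_setOf_eq] at hz1
    obtain ⟨hzl, hw⟩ := hz1
    set m := muAux Θ σ κ (κ - (l + 1)) with hm
    set w := (σ l : ℂ) * zIter Θ σ l z with hwdef
    have hv : w / (Real.exp m : ℂ) ∈ Complex.slitPlane := by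
      have : w / (Real.exp m : ℂ) = (((Real.exp m)⁻¹ : ℝ) : ℂ) * w := by push_cast; ring
      rw [this]
      exact slit_scale (by positivity) hw
    have hε : (∏ j ∈ Finset.Icc (l + 1) κ, (σ j : ℂ)) = 1 ∨
        (∏ j ∈ Finset.Icc (l + 1) κ, (σ j : ℂ)) = -1 := by
      apply prod_pm
      intro j hj
      simp only [Finset.mem_Icc] at hj
      rcases hσ j (by omega) with h' | h' <;> rw [h']
      · left; norm_num
      · right; norm_num
    have hIH := ih (l + 1) (by omega) z hz
    have hP1 : PIter Θ σ κ (l + 1) z = Complex.log (w / (Real.exp m : ℂ)) := by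
      rw [PIter_eq Θ σ hσ hκr (l + 1) hl1 z (HIter_mono Θ σ (by omega) hz),
        log_div_exp hw]
      rw [show zIter Θ σ (l + 1) z
          = Complex.log ((σ l : ℂ) * zIter Θ σ l z) - (Θ (l + 1) : ℂ) from rfl]
      ring
    rw [hP1] at hIH
    have hkey := slit_log hv hε hIH
    have hσl : (σ l : ℂ) * (σ l : ℂ) = 1 := by
      rcases hσ l (by omega) with h' | h' <;> rw [h'] <;> norm_num
    have hPl : PIter Θ σ κ l z
        = zIter Θ σ l z - (σ l : ℂ) * (Real.exp m : ℂ) := by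
      rw [PIter_eq Θ σ hσ hκr l (by omega) z hzl, muAux_step Θ σ hl1, ← hm]
      push_cast
      ring
    have hgoal : (∏ j ∈ Finset.Icc l κ, (σ j : ℂ)) * PIter Θ σ κ l z
        = (Real.exp m : ℂ) *
          ((∏ j ∈ Finset.Icc (l + 1) κ, (σ j : ℂ)) * (w / (Real.exp m : ℂ) - 1)) := by
      rw [prod_Icc_split (by omega), hPl, hwdef]
      have hexp : (Real.exp m : ℂ) ≠ 0 := by exact_mod_cast Real.exp_ne_zero m
      field_simp
      ring_nf
      rw [show ((σ l : ℂ)) ^ 2 = 1 by rw [sq]; exact hσl]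
      ring
    rw [hgoal]
    exact slit_scale (Real.exp_pos m) hkey

end Helpers2


/-- **Remark 5.21** (for a fixed value of the parameter `t`): let `κ = r`, or assume
`k^{ch} ≥ 0` and let `κ ∈ {k^{ch}, r}`. Then for every `l ∈ {0,…,κ}` the function
`𝒫_{l,κ}`, restricted to `H = HIter Θ σ (r+1)`, is holomorphic on `H`; for every
`z ∈ H` one has `(∏_{j=l}^{κ} σ j) * 𝒫_{l,κ} z ∈ ℂ⁻`; and if moreover `z` is real
then `(∏_{j=l}^{κ} σ j) * 𝒫_{l,κ} z` is a positive real number. -/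
theorem PIter_mem_slitPlane (r : ℕ) (Θ σ : ℕ → ℝ)
    (hσ : ∀ i, i ≤ r → σ i = 1 ∨ σ i = -1)
    (κ : ℕ) (hκcase : κ = r ∨ (0 ≤ kch σ r ∧ (κ : ℤ) = kch σ r))
    (l : ℕ) (hl : l ≤ κ) :
    DifferentiableOn ℂ (PIter Θ σ κ l) (HIter Θ σ (r + 1)) ∧
    (∀ z ∈ HIter Θ σ (r + 1),
      (∏ j ∈ Finset.Icc l κ, (σ j : ℂ)) * PIter Θ σ κ l z ∈ Complex.slitPlane) ∧
    (∀ z ∈ HIter Θ σ (r + 1), z.im = 0 →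
      ((∏ j ∈ Finset.Icc l κ, (σ j : ℂ)) * PIter Θ σ κ l z).im = 0 ∧
        0 < ((∏ j ∈ Finset.Icc l κ, (σ j : ℂ)) * PIter Θ σ κ l z).re) := by
  have hκr : κ ≤ r := by
    rcases hκcase with rfl | ⟨h0, hk⟩
    · exact le_rfl
    · rw [kch] at hk
      split_ifs at hk with h
      · obtain ⟨l₀, hl₀⟩ := h
        have hsup : sSup {l : ℕ | l ≤ r ∧ σ l = -1} ≤ r :=
          csSup_le ⟨l₀, hl₀⟩ (fun a ha => ha.1)
        omega
  have hHl : HIter Θ σ (r + 1) ⊆ HIter Θ σ l := HIter_mono Θ σ (by omega)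
  have hEq : ∀ z ∈ HIter Θ σ (r + 1),
      PIter Θ σ κ l z = zIter Θ σ l z - ((muAux Θ σ κ (κ - l) : ℂ) - (Θ l : ℂ)) :=
    fun z hz => PIter_eq Θ σ hσ hκr l hl z (hHl hz)
  refine ⟨?_, ?_, ?_⟩
  · exact DifferentiableOn.congr (((zIter_diff Θ σ l).mono hHl).sub_const _) hEq
  · exact main_slit Θ σ hσ hκr (κ - l) l (by omega)
  · intro z hz him
    have hPim : (PIter Θ σ κ l z).im = 0 := by
      rw [hEq z hz]
      simp [Complex.sub_im, zIter_im Θ σ l z (hHl hz) him]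
    have hprod : (∏ j ∈ Finset.Icc l κ, (σ j : ℂ))
        = (((∏ j ∈ Finset.Icc l κ, σ j : ℝ)) : ℂ) := by
      push_cast; rfl
    have him2 : ((∏ j ∈ Finset.Icc l κ, (σ j : ℂ)) * PIter Θ σ κ l z).im = 0 := by
      rw [hprod, Complex.mul_im, Complex.ofReal_im, hPim, mul_zero, zero_mul, add_zero]
    refine ⟨him2, ?_⟩
    have hmem := main_slit Θ σ hσ hκr (κ - l) l (by omega) z hz
    rcases Complex.mem_slitPlane_iff.mp hmem with h' | h'
    · exact h'
    · exact absurd him2 h'
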